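/- Let K = ℚ(p₁^{1/d₁}, …, p_n^{1/d_n}) where p_i, d_i are rational primes. Then every rational prime q that ramifies in K lies in the set {p₁, d₁, …, p_n, d_n}. -/

import Mathlib

open Polynomial NumberField

/-- The Mahler measure (logarithmic) of an integer polynomial:
`log |leading coefficient| + Σ log max(1,|z|)` over its complex roots. -/
noncomputable def logMahlerMeasure (q : Polynomial ℤ) : ℝ :=
  Real.log |(q.leadingCoeff : ℝ)| +
    ((q.aroots ℂ).map (fun z => Real.log (max 1 ‖z‖))).sum

/-- The primitive integer minimal polynomial of an algebraic number. -/
noncomputable def intMinpoly (α : ℂ) : Polynomial ℤ :=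
  (IsLocalization.integerNormalization (nonZeroDivisors ℤ) (minpoly ℚ α)).primPart

/-- The absolute logarithmic Weil height of an algebraic number `α : ℂ`,
defined as `(1/deg α) * log (Mahler measure of the minimal polynomial of α over ℤ)`.
For transcendental numbers we set it to `0`. -/
noncomputable def weilHeight (α : ℂ) : ℝ :=
  logMahlerMeasure (intMinpoly α) / (minpoly ℚ α).natDegree

/-- The degree of an algebraic number: `[ℚ(α):ℚ]`. -/
noncomputable def degAlg (α : ℂ) : ℕ := (minpoly ℚ α).natDegree

/-- `x` is an accumulation point of the set `s ⊆ ℝ`. -/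
def IsAccumulationPoint (s : Set ℝ) (x : ℝ) : Prop :=
  ∀ η > 0, ∃ y ∈ s, y ≠ x ∧ |y - x| < η

/-- A set `S` of complex (algebraic) numbers is `γ`-Northcott if for every `X` there are
only finitely many `α ∈ S` with `(deg α)^γ * h(α) ≤ X`. -/
def IsGammaNorthcott (S : Set ℂ) (γ : ℝ) : Prop :=
  ∀ X : ℝ, {α : ℂ | α ∈ S ∧ (degAlg α : ℝ) ^ γ * weilHeight α ≤ X}.Finite

/-- A set `S` of complex (algebraic) numbers is `γ`-Bogomolov if `0` is not an
accumulation point of `{(deg α)^γ * h(α) : α ∈ S}`. -/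
def IsGammaBogomolov (S : Set ℂ) (γ : ℝ) : Prop :=
  ¬ IsAccumulationPoint {x : ℝ | ∃ α ∈ S, (degAlg α : ℝ) ^ γ * weilHeight α = x} 0


section Step
variable {F L : Type*} [Field F] [Field L] [NumberField F] [NumberField L] [Algebra F L]

lemma RO_algebraMap_coe (x : 𝓞 F) : (algebraMap (𝓞 F) (𝓞 L) x : L) = algebraMap F L (x : F) := rfl

lemma RO_algebraMap_injective : Function.Injective (algebraMap (𝓞 F) (𝓞 L)) := by
  intro x y h
  have := congrArg (fun z : 𝓞 L => (z : L)) h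
  simp only [RO_algebraMap_coe] at this
  exact NumberField.RingOfIntegers.ext ((algebraMap F L).injective this)

/-- If a prime `Q` of `𝓞 L` contains the relative different of `L/F` and contains `q`,
and `L = F(α)` with `α ^ dd = pp`, then `q ∣ pp` or `q ∣ dd`. -/
lemma step_lemma (α : 𝓞 L) (pp dd q : ℕ) (hdd : dd ≠ 0) (hdd1 : dd ≠ 1) (hq : q.Prime)
    (hα : α ^ dd = (pp : 𝓞 L))
    (hgen : Algebra.adjoin F {(algebraMap (𝓞 L) L α)} = ⊤)
    (Q : Ideal (𝓞 L)) [hQp : Q.IsPrime] (hQq : (q : 𝓞 L) ∈ Q)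
    (hQ : differentIdeal (𝓞 F) (𝓞 L) ≤ Q) :
    q ∣ pp ∨ q ∣ dd := by
  classical
  have hint : IsIntegral (𝓞 F) α := IsIntegralClosure.isIntegral (𝓞 F) L α
  set g := minpoly (𝓞 F) α with hg
  set f : (𝓞 F)[X] := X ^ dd - C (pp : 𝓞 F) with hf
  have hroot : aeval α f = 0 := by
    simp [hf, hα, map_natCast]
  have hdvd : g ∣ f := minpoly.isIntegrallyClosed_dvd hint hroot
  obtain ⟨h, hfh⟩ := hdvd
  -- evaluate derivative
  have hder : aeval α (derivative f) = aeval α (derivative g) * aeval α h := by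
    rw [hfh, derivative_mul, map_add, map_mul, map_mul, minpoly.aeval, zero_mul, add_zero]
  have hderf : aeval α (derivative f) = (dd : 𝓞 L) * α ^ (dd - 1) := by
    simp [hf, derivative_X_pow]
  have hmem : aeval α (derivative g) ∈ Q :=
    hQ (aeval_derivative_mem_differentIdeal (𝓞 F) F L α hgen)
  have hmul : (dd : 𝓞 L) * α ^ (dd - 1) ∈ Q := by
    rw [← hderf, hder]; exact Ideal.mul_mem_right _ _ hmem
  -- now q divides dd or pp
  have key : (dd : 𝓞 L) ∈ Q ∨ (pp : 𝓞 L) ∈ Q := by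
    rcases hQp.mem_or_mem hmul with h1 | h2
    · exact Or.inl h1
    · right
      have hαQ : α ∈ Q := hQp.mem_of_pow_mem _ h2
      rw [← hα]; exact Ideal.pow_mem_of_mem Q hαQ dd (Nat.pos_of_ne_zero hdd)
  -- transfer to ℤ
  have main : ∀ m : ℕ, (m : 𝓞 L) ∈ Q → q ∣ m := by
    intro m hm
    set ZQ := Q.comap (algebraMap ℤ (𝓞 L)) with hZQ
    have hZQp : ZQ.IsPrime := Ideal.IsPrime.comap _
    have hqZ : (q : ℤ) ∈ ZQ := by
      simp only [hZQ, Ideal.mem_comap, map_intCast]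
      exact_mod_cast hQq
    have hmZ : (m : ℤ) ∈ ZQ := by
      simp only [hZQ, Ideal.mem_comap, map_intCast]
      exact_mod_cast hm
    have hmax : (Ideal.span {(q : ℤ)}).IsMaximal :=
      PrincipalIdealRing.isMaximal_of_irreducible (Nat.prime_iff_prime_int.mp hq).irreducible
    have hle : Ideal.span {(q : ℤ)} ≤ ZQ := by
      rw [Ideal.span_le, Set.singleton_subset_iff]; exact hqZ
    have heq : ZQ = Ideal.span {(q : ℤ)} := (hmax.eq_of_le hZQp.ne_top hle).symm
    have : (m : ℤ) ∈ Ideal.span {(q : ℤ)} := heq ▸ hmZ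
    rw [Ideal.mem_span_singleton] at this
    exact_mod_cast this
  rcases key with h | h
  · exact Or.inr (main dd h)
  · exact Or.inl (main pp h)

end Step

section Step2
variable {F L : Type*} [Field F] [Field L] [NumberField F] [NumberField L] [Algebra F L]

lemma different_le_of_ramified (Q : Ideal (𝓞 L)) [hQp : Q.IsPrime]
    (P : Ideal (𝓞 F)) [hPp : P.IsPrime] (hP : P ≠ ⊥)
    (he : 1 < Ideal.ramificationIdx' P Q) :
    differentIdeal (𝓞 F) (𝓞 L) ≤ Q := by
  set e := Ideal.ramificationIdx' P Q with hee
  haveI : P.IsMaximal := Ring.DimensionLEOne.maximalOfPrime hP hPp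
  have hle : P.map (algebraMap (𝓞 F) (𝓞 L)) ≤ Q ^ e := Ideal.le_pow_ramificationIdx
  have hdvd : Q ^ e ∣ P.map (algebraMap (𝓞 F) (𝓞 L)) := Ideal.dvd_iff_le.mpr hle
  have h2 : Q ^ (e - 1) ∣ differentIdeal (𝓞 F) (𝓞 L) :=
    pow_sub_one_dvd_differentIdeal (𝓞 F) Q e hP hdvd
  have h3 : Q ∣ differentIdeal (𝓞 F) (𝓞 L) :=
    dvd_trans (dvd_pow_self Q (by omega)) h2
  exact Ideal.le_of_dvd h3

end Step2

lemma base_no_ram (K : IntermediateField ℚ ℂ) [NumberField K] (hK : K = ⊥)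
    (q : ℕ) (hq : q.Prime)
    (hram : ∃ P : Ideal (𝓞 K), P.IsPrime ∧ P ≠ ⊥ ∧ (q : 𝓞 K) ∈ P ∧
      1 < Ideal.ramificationIdx' (Ideal.span {(q : ℤ)}) P) : False := by
  classical
  set φ := algebraMap ℤ (𝓞 K) with hφ
  have hinj : Function.Injective φ := fun a b h => by
    have : (a : 𝓞 K) = (b : 𝓞 K) := by simpa [hφ, algebraMap_int_eq] using h
    exact_mod_cast this
  have hsurj : Function.Surjective φ := by
    intro x
    have hxK : ((x : K) : ℂ) ∈ (⊥ : IntermediateField ℚ ℂ) := hK ▸ (x : K).2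
    rw [IntermediateField.mem_bot] at hxK
    obtain ⟨r, hr⟩ := hxK
    have hxint : IsIntegral ℤ ((x : K) : ℂ) :=
      (NumberField.RingOfIntegers.isIntegral_coe x).map (IsScalarTower.toAlgHom ℤ K ℂ)
    have hrint : IsIntegral ℤ r := by
      rw [← hr] at hxint
      exact (isIntegral_algebraMap_iff ((algebraMap ℚ ℂ).injective)).mp hxint
    obtain ⟨m, hm⟩ := IsIntegrallyClosed.isIntegral_iff.mp hrint
    refine ⟨m, ?_⟩
    apply NumberField.RingOfIntegers.ext
    apply Subtype.coe_injective (p := fun z : ℂ => z ∈ K)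
    show ((algebraMap ℤ (𝓞 K) m : K) : ℂ) = ((x : K) : ℂ)
    have h1 : ((algebraMap ℤ (𝓞 K) m : K) : ℂ) = (m : ℂ) := by
      push_cast
      simp
    rw [h1, ← hr, ← hm]
    simp
  obtain ⟨P, hPp, hPbot, hqP, hlt⟩ := hram
  have hcomap : P.comap φ = Ideal.span {(q : ℤ)} := by
    have hqZ : (q : ℤ) ∈ P.comap φ := by
      simp only [Ideal.mem_comap, hφ, map_intCast]
      exact_mod_cast hqP
    have hmax : (Ideal.span {(q : ℤ)}).IsMaximal :=
      PrincipalIdealRing.isMaximal_of_irreducible (Nat.prime_iff_prime_int.mp hq).irreducible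
    have hle : Ideal.span {(q : ℤ)} ≤ P.comap φ := by
      rw [Ideal.span_le, Set.singleton_subset_iff]; exact hqZ
    exact (hmax.eq_of_le (hPp.comap φ).ne_top hle).symm
  have hgt : ¬ (Ideal.span {(q : ℤ)}).map φ ≤ P ^ 2 := by
    intro hle2
    have hPeq : P = (Ideal.span {(q : ℤ)}).map φ := by
      rw [← hcomap, Ideal.map_comap_of_surjective φ hsurj]
    rw [hPeq, ← Ideal.map_pow] at hle2
    have hker : RingHom.ker φ = ⊥ := (RingHom.injective_iff_ker_eq_bot φ).mp hinj
    have h3 : Ideal.span {(q : ℤ)} ≤ Ideal.span {(q : ℤ)} ^ 2 := by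
      have := Ideal.comap_mono hle2 (f := φ)
      rwa [Ideal.comap_map_of_surjective' φ hsurj, Ideal.comap_map_of_surjective' φ hsurj,
        hker, sup_bot_eq, sup_bot_eq] at this
    rw [Ideal.span_singleton_pow] at h3
    have h4 : (q : ℤ) ∈ Ideal.span {(q : ℤ) ^ 2} := h3 (Ideal.mem_span_singleton_self _)
    rw [Ideal.mem_span_singleton] at h4
    have h5 : q ^ 2 ∣ q := by exact_mod_cast h4
    have h6 := Nat.le_of_dvd hq.pos h5
    nlinarith [hq.two_le]
  exact absurd (Ideal.ramificationIdx_lt hgt) (by omega)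

section Aux

set_option maxHeartbeats 1000000 in
set_option synthInstance.maxHeartbeats 1000000 in
theorem aux_ram : ∀ (n : ℕ) (p d : Fin n → ℕ), (∀ i, (p i).Prime) → (∀ i, (d i).Prime) →
    ∀ (K : IntermediateField ℚ ℂ), NumberField K →
    K = IntermediateField.adjoin ℚ (Set.range fun i => (((p i : ℝ) ^ ((d i : ℝ)⁻¹) : ℝ) : ℂ)) →
    ∀ q : ℕ, q.Prime →
    (∃ P : Ideal (𝓞 K), P.IsPrime ∧ P ≠ ⊥ ∧ (q : 𝓞 K) ∈ P ∧
      1 < Ideal.ramificationIdx' (Ideal.span {(q : ℤ)}) P) →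
    (∃ i, q = p i) ∨ (∃ i, q = d i) := by
  intro n
  induction n with
  | zero =>
    intro p d hp hd K hNF hK q hq hram
    exfalso
    letI := hNF
    have hKbot : K = ⊥ := by
      rw [hK, Set.range_eq_empty, IntermediateField.adjoin_empty]
    exact base_no_ram K hKbot q hq hram
  | succ n IH =>
    intro p d hp hd K hNF hK q hq hram
    letI := hNF
    set r : Fin (n + 1) → ℂ := fun i => (((p i : ℝ) ^ ((d i : ℝ)⁻¹) : ℝ) : ℂ) with hrdef
    have hr_pow : ∀ i, (r i) ^ (d i) = ((p i : ℕ) : ℂ) := by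
      intro i
      have h : ((p i : ℝ) ^ ((d i : ℝ)⁻¹)) ^ (d i) = (p i : ℝ) := by
        rw [← Real.rpow_natCast ((p i : ℝ) ^ ((d i : ℝ)⁻¹)) (d i), ← Real.rpow_mul (by positivity),
          inv_mul_cancel₀ (by exact_mod_cast (hd i).ne_zero), Real.rpow_one]
      show ((((p i : ℝ) ^ ((d i : ℝ)⁻¹) : ℝ) : ℂ)) ^ (d i) = ((p i : ℕ) : ℂ)
      exact_mod_cast congrArg Complex.ofReal h
    have hr_int : ∀ i, IsIntegral ℤ (r i) := by
      intro i
      refine ⟨X ^ (d i) - C ((p i : ℤ)), monic_X_pow_sub_C _ (hd i).ne_zero, ?_⟩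
      have := hr_pow i
      simp only [eval₂_sub, eval₂_X_pow, eval₂_C]
      push_cast
      rw [this]
      ring
    set S : Set ℂ := Set.range (fun i : Fin n => r i.castSucc) with hSdef
    set T : Set ℂ := {r (Fin.last n)} with hTdef
    have hrange : Set.range r = S ∪ T := by
      ext z
      constructor
      · rintro ⟨i, rfl⟩
        rcases Fin.eq_castSucc_or_eq_last i with ⟨j, rfl⟩ | rfl
        · exact Or.inl ⟨j, rfl⟩
        · exact Or.inr rfl
      · rintro (⟨j, rfl⟩ | hz)
        · exact ⟨j.castSucc, rfl⟩
        · exact ⟨Fin.last n, hz.symm ▸ rfl⟩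
    set F : IntermediateField ℚ ℂ := IntermediateField.adjoin ℚ S with hFdef
    have hKST : K = IntermediateField.adjoin ℚ (S ∪ T) := by rw [hK, hrange]
    have hFK : F ≤ K := by
      rw [hKST]
      exact IntermediateField.adjoin.mono ℚ _ _ Set.subset_union_left
    haveI hFfin : FiniteDimensional ℚ F := by
      haveI h2 : FiniteDimensional ℚ K.toSubmodule := hNF.to_finiteDimensional
      exact Submodule.finiteDimensional_of_le (S₁ := F.toSubmodule) (S₂ := K.toSubmodule)
        (fun x hx => hFK hx)
    haveI hFNF : NumberField F := ⟨⟩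
    letI : Algebra F K := (IntermediateField.inclusion hFK).toRingHom.toAlgebra
    haveI : IsScalarTower F K ℂ := IsScalarTower.of_algebraMap_eq
      (fun x => rfl)
    haveI : IsScalarTower ℚ F K := IsScalarTower.of_algebraMap_eq
      (fun x => congrFun (congrArg DFunLike.coe
        (Subsingleton.elim (algebraMap ℚ K) ((algebraMap F K).comp (algebraMap ℚ F)))) x)
    haveI : FiniteDimensional F K := Module.Finite.of_restrictScalars_finite ℚ F K
    -- the adjoined element
    have hmemK : r (Fin.last n) ∈ K := by
      rw [hK]
      exact IntermediateField.subset_adjoin ℚ _ ⟨Fin.last n, rfl⟩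
    set αK : K := ⟨r (Fin.last n), hmemK⟩ with hαKdef
    have hαK_int : IsIntegral ℤ αK := by
      have : algebraMap K ℂ αK = r (Fin.last n) := rfl
      rw [← isIntegral_algebraMap_iff (algebraMap K ℂ).injective, this]
      exact hr_int _
    set α : 𝓞 K := ⟨αK, hαK_int⟩ with hαdef
    have hαcoe : algebraMap (𝓞 K) K α = αK := rfl
    have hα_pow : α ^ (d (Fin.last n)) = ((p (Fin.last n) : ℕ) : 𝓞 K) := by
      apply NumberField.RingOfIntegers.ext
      apply Subtype.coe_injective (p := fun z : ℂ => z ∈ K)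
      show ((((α ^ d (Fin.last n) : 𝓞 K) : K)) : ℂ) = (((((p (Fin.last n) : ℕ) : 𝓞 K) : K)) : ℂ)
      push_cast
      exact hr_pow (Fin.last n)
    -- generation
    have hgenfield : IntermediateField.adjoin F {αK} = ⊤ := by
      rw [eq_top_iff]
      rintro x -
      have hx : (x : ℂ) ∈ IntermediateField.adjoin F T := by
        have h1 : (IntermediateField.adjoin F T).restrictScalars ℚ =
            IntermediateField.adjoin ℚ (S ∪ T) := IntermediateField.adjoin_adjoin_left ℚ S T
        have hxK : (x : ℂ) ∈ IntermediateField.adjoin ℚ (S ∪ T) := by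
          rw [← hKST]; exact x.2
        rw [← h1] at hxK
        rwa [IntermediateField.mem_restrictScalars] at hxK
      set ι : K →ₐ[F] ℂ := IsScalarTower.toAlgHom F K ℂ with hι
      have hmap : (IntermediateField.adjoin F {αK}).map ι = IntermediateField.adjoin F T := by
        rw [IntermediateField.adjoin_map]
        congr 1
        simp only [Set.image_singleton]
        rfl
      rw [← hmap] at hx
      have hx' : (x : ℂ) ∈ ι '' (IntermediateField.adjoin F {αK}) := by
        rwa [← IntermediateField.coe_map]
      obtain ⟨y, hy, hyx⟩ := hx'
      have : y = x := Subtype.coe_injective hyx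
      rwa [← this]
    have hgen : Algebra.adjoin F {(algebraMap (𝓞 K) K α)} = ⊤ := by
      rw [hαcoe]
      have hint' : IsIntegral F αK := IsIntegral.of_finite F αK
      rw [← IntermediateField.adjoin_simple_toSubalgebra_of_isAlgebraic hint'.isAlgebraic, hgenfield]
      rfl
    -- now the ideal arguments
    obtain ⟨Q, hQp, hQbot, hQq, hQlt⟩ := hram
    haveI := hQp
    set P' : Ideal (𝓞 F) := Q.comap (algebraMap (𝓞 F) (𝓞 K)) with hP'def
    haveI hP'p : P'.IsPrime := hQp.comap _
    have hqP' : (q : 𝓞 F) ∈ P' := by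
      rw [hP'def, Ideal.mem_comap, map_natCast]
      exact hQq
    have hP'bot : P' ≠ ⊥ := by
      intro h
      rw [h] at hqP'
      have : (q : 𝓞 F) = 0 := hqP'
      exact hq.ne_zero (by exact_mod_cast this)
    have hinj : Function.Injective (algebraMap (𝓞 F) (𝓞 K)) := RO_algebraMap_injective
    have hZinj : Function.Injective (algebraMap ℤ (𝓞 K)) := fun a b h => by
      have : (a : 𝓞 K) = (b : 𝓞 K) := by simpa [algebraMap_int_eq] using h
      exact_mod_cast this
    have hg0 : P'.map (algebraMap (𝓞 F) (𝓞 K)) ≠ ⊥ := by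
      rw [Ne, Ideal.map_eq_bot_iff_of_injective hinj]
      exact hP'bot
    have hfg : (Ideal.span {(q : ℤ)}).map (algebraMap ℤ (𝓞 K)) ≠ ⊥ := by
      rw [Ne, Ideal.map_eq_bot_iff_of_injective hZinj, Ideal.span_singleton_eq_bot]
      exact_mod_cast hq.ne_zero
    have hg : P'.map (algebraMap (𝓞 F) (𝓞 K)) ≤ Q := Ideal.map_comap_le
    have htower : Ideal.ramificationIdx' (Ideal.span {(q : ℤ)}) Q =
        Ideal.ramificationIdx' (Ideal.span {(q : ℤ)}) P' *
        Ideal.ramificationIdx' P' Q :=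
      Ideal.ramificationIdx_algebra_tower hg0 hfg hg
    rw [htower] at hQlt
    by_cases h2 : 1 < Ideal.ramificationIdx' P' Q
    · -- ramified in the top step
      have hQdiff : differentIdeal (𝓞 F) (𝓞 K) ≤ Q :=
        different_le_of_ramified Q P' hP'bot h2
      rcases step_lemma α (p (Fin.last n)) (d (Fin.last n)) q (hd _).ne_zero
        (hd _).ne_one hq hα_pow hgen Q hQq hQdiff with h | h
      · exact Or.inl ⟨Fin.last n, ((Nat.prime_dvd_prime_iff_eq hq (hp _)).mp h)⟩
      · exact Or.inr ⟨Fin.last n, ((Nat.prime_dvd_prime_iff_eq hq (hd _)).mp h)⟩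
    · -- ramified below
      have h1 : 1 < Ideal.ramificationIdx' (Ideal.span {(q : ℤ)}) P' := by
        rcases Nat.lt_or_ge 1 (Ideal.ramificationIdx' (Ideal.span {(q : ℤ)}) P') with h | h
        · exact h
        · exfalso
          push_neg at h2
          nlinarith
      rcases IH (fun i => p i.castSucc) (fun i => d i.castSucc) (fun i => hp _) (fun i => hd _)
        F hFNF rfl q hq ⟨P', hP'p, hP'bot, hqP', h1⟩ with ⟨i, hi⟩ | ⟨i, hi⟩
      · exact Or.inl ⟨i.castSucc, hi⟩
      · exact Or.inr ⟨i.castSucc, hi⟩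

end Aux

open IntermediateField in
/-- Let `K = ℚ(p₁^{1/d₁}, …, p_n^{1/d_n})` where the `p i`, `d i` are rational primes
(and the roots are the real positive ones). Then every rational prime `q` that ramifies
in `K` lies in the set `{p₁, d₁, …, p_n, d_n}`. -/
theorem ramified_primes_of_adjoin_roots
    (n : ℕ) (p d : Fin n → ℕ) (hp : ∀ i, (p i).Prime) (hd : ∀ i, (d i).Prime)
    (K : IntermediateField ℚ ℂ) [NumberField K]
    (hK : K = adjoin ℚ (Set.range fun i => (((p i : ℝ) ^ ((d i : ℝ)⁻¹) : ℝ) : ℂ)))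
    (q : ℕ) (hq : q.Prime)
    (hram : ∃ P : Ideal (𝓞 K), P.IsPrime ∧ P ≠ ⊥ ∧ (q : 𝓞 K) ∈ P ∧
      1 < Ideal.ramificationIdx' (Ideal.span {(q : ℤ)}) P) :
    (∃ i, q = p i) ∨ (∃ i, q = d i) := by
  exact aux_ram n p d hp hd K ‹NumberField K› hK q hq hram
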